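/- For every regular expression e over α: (1) the set ρ(e) is finite; (2) ρ(e) is closed under Antimirov derivatives, i.e. if e' ∈ ρ(e), a ∈ α and e'' ∈ ∂(e', a), then e'' ∈ ρ(e); and (3) ι(e) ⊆ ρ(e). -/

import Mathlib

/-- The Antimirov derivative of a regular expression with respect to a letter. -/
def aderiv {α : Type*} : RegularExpression α → α → Set (RegularExpression α)
  | .zero, _ => ∅
  | .epsilon, _ => ∅
  | .char b, a => {f | a = b ∧ f = 1}
  | .plus e f, a => aderiv e a ∪ aderiv f a
  | .comp e f, a =>
      (fun e' => e' * f) '' aderiv e a ∪ {f' | f' ∈ aderiv f a ∧ [] ∈ e.matches'}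
  | .star e, a => (fun e' => e' * e.star) '' aderiv e a

/-- The initial states of the Antimirov automaton of a regular expression. -/
def ini {α : Type*} : RegularExpression α → Set (RegularExpression α)
  | .zero => ∅
  | .epsilon => {1}
  | .char a => {RegularExpression.char a}
  | .plus e f => ini e ∪ ini f
  | .comp e f => (fun e' => e' * f) '' ini e
  | .star e => (fun e' => e' * e.star) '' ini e ∪ {1}

/-- The states of the Antimirov automaton of a regular expression. -/
def rho {α : Type*} : RegularExpression α → Set (RegularExpression α)
  | .zero => ∅
  | .epsilon => {1}
  | .char a => {RegularExpression.char a, 1}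
  | .plus e f => rho e ∪ rho f
  | .comp e f => (fun e' => e' * f) '' rho e ∪ rho f
  | .star e => (fun e' => e' * e.star) '' rho e ∪ {1}

lemma aderiv_subset_rho {α : Type*} (e : RegularExpression α) (a : α) :
    aderiv e a ⊆ rho e := by
  induction e with
  | zero => simp [aderiv, rho]
  | epsilon => simp [aderiv, rho]
  | char b =>
    intro x hx
    obtain ⟨-, rfl⟩ := hx
    simp [rho]
  | plus e f ihe ihf =>
    exact Set.union_subset_union ihe ihf
  | comp e f ihe ihf =>
    intro x hx
    rcases hx with ⟨g, hg, rfl⟩ | ⟨hx, -⟩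
    · exact Or.inl ⟨g, ihe hg, rfl⟩
    · exact Or.inr (ihf hx)
  | star e ihe =>
    intro x hx
    obtain ⟨g, hg, rfl⟩ := hx
    exact Or.inl ⟨g, ihe hg, rfl⟩

lemma rho_closed {α : Type*} (e : RegularExpression α) :
    ∀ e' ∈ rho e, ∀ (a : α), ∀ e'' ∈ aderiv e' a, e'' ∈ rho e := by
  induction e with
  | zero => simp [rho]
  | epsilon =>
    rintro e' he' a e'' he''
    simp only [rho, Set.mem_singleton_iff] at he'
    subst he'
    simp [aderiv, show (1 : RegularExpression α) = .epsilon from rfl] at he''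
  | char b =>
    rintro e' he' a e'' he''
    rcases he' with rfl | rfl
    · obtain ⟨-, rfl⟩ := he''
      simp [rho]
    · simp [aderiv, show (1 : RegularExpression α) = .epsilon from rfl] at he''
  | plus e f ihe ihf =>
    rintro e' (he' | he') a e'' he''
    · exact Or.inl (ihe e' he' a e'' he'')
    · exact Or.inr (ihf e' he' a e'' he'')
  | comp e f ihe ihf =>
    rintro e' (⟨g, hg, rfl⟩ | he') a e'' he''
    · rcases he'' with ⟨h, hh, rfl⟩ | ⟨hx, -⟩
      · exact Or.inl ⟨h, ihe g hg a h hh, rfl⟩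
      · exact Or.inr (aderiv_subset_rho f a hx)
    · exact Or.inr (ihf e' he' a e'' he'')
  | star e ihe =>
    rintro e' (⟨g, hg, rfl⟩ | rfl) a e'' he''
    · rcases he'' with ⟨h, hh, rfl⟩ | ⟨hx, -⟩
      · exact Or.inl ⟨h, ihe g hg a h hh, rfl⟩
      · obtain ⟨h, hh, rfl⟩ := hx
        exact Or.inl ⟨h, aderiv_subset_rho e a hh, rfl⟩
    · simp [aderiv, show (1 : RegularExpression α) = .epsilon from rfl] at he''

/-- `ρ(e)` is finite, closed under Antimirov derivatives, and contains `ι(e)`. -/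
theorem rho_finite_closed_contains_ini {α : Type*} (e : RegularExpression α) :
    (rho e).Finite ∧
    (∀ e' ∈ rho e, ∀ (a : α), ∀ e'' ∈ aderiv e' a, e'' ∈ rho e) ∧
    ini e ⊆ rho e := by
  refine ⟨?_, rho_closed e, ?_⟩
  · induction e with
    | zero => simp [rho]
    | epsilon => simp [rho]
    | char b => simp [rho]
    | plus e f ihe ihf => exact ihe.union ihf
    | comp e f ihe ihf => exact (ihe.image _).union ihf
    | star e ihe => exact (ihe.image _).union (Set.finite_singleton _)
  · induction e with
    | zero => simp [ini, rho]
    | epsilon => simp [ini, rho]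
    | char b => simp [ini, rho]
    | plus e f ihe ihf => exact Set.union_subset_union ihe ihf
    | comp e f ihe ihf =>
      exact (Set.image_mono ihe).trans Set.subset_union_left
    | star e ihe =>
      exact Set.union_subset_union (Set.image_mono ihe) (le_refl _)
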